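/- Let w, S, I be real numbers with w > 0, S ≥ 0 and I > 0, and define g(γ) = w·log(1+γ) − w·γ + w·(1+γ)·S/(S+I) for γ ∈ (−1, ∞). Then for every γ > −1 one has g(γ) ≤ g(S/I) = w·log(1 + S/I), with equality if and only if γ = S/I. -/

import Mathlib

/-- Per-user optimization of the auxiliary SINR variable: with `w > 0`, `S ≥ 0`, `I > 0`,
and `g(γ) = w·log(1+γ) − w·γ + w·(1+γ)·S/(S+I)` on `(−1,∞)`, every `γ > −1` satisfies
`g(γ) ≤ g(S/I) = w·log(1+S/I)`, with equality iff `γ = S/I`. -/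
theorem sinr_auxiliary_opt (w S I : ℝ) (hw : 0 < w) (hS : 0 ≤ S) (hI : 0 < I)
    (g : ℝ → ℝ)
    (hg : ∀ γ : ℝ, g γ = w * Real.log (1 + γ) - w * γ + w * (1 + γ) * S / (S + I)) :
    ∀ γ : ℝ, -1 < γ →
      (g γ ≤ g (S / I) ∧ g (S / I) = w * Real.log (1 + S / I) ∧
        (g γ = g (S / I) ↔ γ = S / I)) := by
  have hSI : 0 < S + I := by linarith
  have hstar : 0 < 1 + S / I := by positivity
  have hg2 : g (S / I) = w * Real.log (1 + S / I) := by
    rw [hg]; field_simp; ring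
  intro γ hγ
  have h1γ : 0 < 1 + γ := by linarith
  set a : ℝ := (1 + γ) * I / (S + I) with ha_def
  have ha : 0 < a := by positivity
  have hae : a = (1 + γ) / (1 + S / I) := by
    rw [ha_def]; field_simp [ha_def]; ring
  have hla : Real.log a = Real.log (1 + γ) - Real.log (1 + S / I) := by
    rw [hae, Real.log_div h1γ.ne' hstar.ne']
  have hid : g γ - g (S / I) = w * (Real.log a - (a - 1)) := by
    rw [hg, hg2, hla]
    rw [ha_def]
    field_simp [ha_def]
    ring
  have key : Real.log a ≤ a - 1 := Real.log_le_sub_one_of_pos ha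
  have hle : g γ ≤ g (S / I) := by nlinarith
  refine ⟨hle, hg2, ?_, ?_⟩
  · intro h
    have h2 : Real.log a = a - 1 := by
      have : w * (Real.log a - (a - 1)) = 0 := by rw [← hid, h]; ring
      have := mul_eq_zero.mp this
      rcases this with h' | h'
      · exact absurd h' hw.ne'
      · linarith
    by_contra hne
    have hane : a ≠ 1 := by
      intro h1
      apply hne
      rw [hae] at h1
      field_simp at h1
      have : γ * I = S := by linarith
      field_simp
      linarith
    exact absurd h2 (Real.log_lt_sub_one_of_pos ha hane).ne
  · intro h
    subst h
    rfl
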